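/- Let H and W be real separable Hilbert spaces with Hilbert bases (e_n)_{n∈ℕ} of H and (g_n)_{n∈ℕ} of W, let μ be a finite Borel measure on H with finite second moment, let A : H → W be a continuous linear map, and let ε > 0. Then there exist d, m ∈ ℕ and a continuous function f : ℝ^d → ℝ^m such that the DeepONet F = E_{W,m} ∘ f ∘ P_{H,d} satisfies ∫_H ‖A x − F(x)‖_W² dμ(x) < ε. -/

import Mathlib

open MeasureTheory Filter
open scoped RealInnerProductSpace

/-- The projection map `P_{H,d} : H → ℝ^d`, `x ↦ (⟪x,e₁⟫, …, ⟪x,e_d⟫)`,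
associated with a Hilbert basis `e` of `H`. -/
noncomputable def projMap {H : Type*} [NormedAddCommGroup H] [InnerProductSpace ℝ H]
    (e : HilbertBasis ℕ ℝ H) (d : ℕ) (x : H) : EuclideanSpace ℝ (Fin d) :=
  WithLp.toLp 2 (fun i : Fin d => ⟪x, e i⟫)

/-- The extension map `E_{W,m} : ℝ^m → W`, `a ↦ ∑_{i=1}^m aᵢ gᵢ`,
associated with a Hilbert basis `g` of `W`. -/
noncomputable def extMap {W : Type*} [NormedAddCommGroup W] [InnerProductSpace ℝ W]
    (g : HilbertBasis ℕ ℝ W) (m : ℕ) (a : EuclideanSpace ℝ (Fin m)) : W :=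
  ∑ i : Fin m, a i • g i

-- Bessel: norm of truncation is at most the norm
lemma trunc_norm_le {E : Type*} [NormedAddCommGroup E] [InnerProductSpace ℝ E]
    {ι : Type*} {v : ι → E} (hv : Orthonormal ℝ v) (x : E) (s : Finset ι) :
    ‖∑ i ∈ s, ⟪x, v i⟫ • v i‖ ≤ ‖x‖ := by
  have h1 : ‖∑ i ∈ s, ⟪x, v i⟫ • v i‖ ^ 2 ≤ ‖x‖ ^ 2 := by
    rw [← real_inner_self_eq_norm_sq, hv.inner_sum]
    calc ∑ i ∈ s, (starRingEnd ℝ) ⟪x, v i⟫ * ⟪x, v i⟫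
        = ∑ i ∈ s, ‖⟪v i, x⟫‖ ^ 2 := by
          refine Finset.sum_congr rfl fun i _ => ?_
          simp [Real.norm_eq_abs, sq_abs, real_inner_comm, sq]
      _ ≤ ‖x‖ ^ 2 := hv.sum_inner_products_le x
  nlinarith [norm_nonneg (∑ i ∈ s, ⟪x, v i⟫ • v i), norm_nonneg x]

theorem stmt_3 (H W : Type*) [NormedAddCommGroup H] [InnerProductSpace ℝ H]
    [NormedAddCommGroup W] [InnerProductSpace ℝ W]
    [MeasurableSpace H] [BorelSpace H]
    (e : HilbertBasis ℕ ℝ H) (g : HilbertBasis ℕ ℝ W)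
    (μ : Measure H) [IsFiniteMeasure μ]
    (hμ : Integrable (fun x : H => ‖x‖ ^ 2) μ)
    (A : H →L[ℝ] W) (ε : ℝ) (hε : 0 < ε) :
    ∃ (d m : ℕ) (f : EuclideanSpace ℝ (Fin d) → EuclideanSpace ℝ (Fin m)),
      Continuous f ∧
      Integrable (fun x : H => ‖A x - extMap g m (f (projMap e d x))‖ ^ 2) μ ∧
      ∫ x : H, ‖A x - extMap g m (f (projMap e d x))‖ ^ 2 ∂μ < ε := by
  classical
  set S : ℕ → H → H := fun n x => ∑ i ∈ Finset.range n, ⟪x, e i⟫ • e i with hSdef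
  set T : ℕ → H → W := fun n x => ∑ j ∈ Finset.range n, ⟪A (S n x), g j⟫ • g j with hTdef
  -- pointwise norm bounds
  have hSle : ∀ n x, ‖S n x‖ ≤ ‖x‖ := fun n x => trunc_norm_le e.orthonormal x _
  have hTle : ∀ n x, ‖T n x‖ ≤ ‖A‖ * ‖x‖ := fun n x =>
    (trunc_norm_le g.orthonormal (A (S n x)) _).trans
      ((A.le_opNorm _).trans (by
        have := hSle n x
        nlinarith [norm_nonneg A, norm_nonneg x]))
  have hbound : ∀ n x, ‖A x - T n x‖ ≤ 2 * ‖A‖ * ‖x‖ := by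
    intro n x
    calc ‖A x - T n x‖ ≤ ‖A x‖ + ‖T n x‖ := norm_sub_le _ _
      _ ≤ ‖A‖ * ‖x‖ + ‖A‖ * ‖x‖ := add_le_add (A.le_opNorm x) (hTle n x)
      _ = 2 * ‖A‖ * ‖x‖ := by ring
  -- pointwise convergence
  have hSlim : ∀ x : H, Tendsto (fun n => S n x) atTop (nhds x) := by
    intro x
    have h := (e.hasSum_repr x).tendsto_sum_nat
    convert h using 2 with n
    refine Finset.sum_congr rfl fun i _ => ?_
    rw [HilbertBasis.repr_apply_apply, real_inner_comm]
  have hQlim : ∀ y : W, Tendsto (fun n => ∑ j ∈ Finset.range n, ⟪y, g j⟫ • g j) atTop (nhds y) := by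
    intro y
    have h := (g.hasSum_repr y).tendsto_sum_nat
    convert h using 2 with n
    refine Finset.sum_congr rfl fun i _ => ?_
    rw [HilbertBasis.repr_apply_apply, real_inner_comm]
  have hlim : ∀ x : H, Tendsto (fun n => ‖A x - T n x‖ ^ 2) atTop (nhds 0) := by
    intro x
    have key : Tendsto (fun n => ‖A x - T n x‖) atTop (nhds 0) := by
      have h1 : Tendsto (fun n => ‖A x - ∑ j ∈ Finset.range n, ⟪A x, g j⟫ • g j‖) atTop (nhds 0) := by
        have := (tendsto_const_nhds (x := A x) (f := atTop)).sub (hQlim (A x))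
        rw [sub_self] at this
        simpa [Function.comp_def] using (continuous_norm.tendsto 0).comp this
      have h2 : Tendsto (fun n => ‖A‖ * ‖x - S n x‖) atTop (nhds 0) := by
        have hx : Tendsto (fun n => ‖x - S n x‖) atTop (nhds 0) := by
          have := (tendsto_const_nhds (x := x) (f := atTop)).sub (hSlim x)
          rw [sub_self] at this
          simpa [Function.comp_def] using (continuous_norm.tendsto 0).comp this
        simpa using hx.const_mul ‖A‖
      have hsum : Tendsto (fun n => ‖A x - ∑ j ∈ Finset.range n, ⟪A x, g j⟫ • g j‖
          + ‖A‖ * ‖x - S n x‖) atTop (nhds 0) := by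
        simpa using h1.add h2
      refine squeeze_zero (fun n => norm_nonneg _) (fun n => ?_) hsum
      -- ‖A x - T n x‖ ≤ ‖A x - Q_n (A x)‖ + ‖Q_n (A x - A (S n x))‖ ≤ ...
      have hQdiff : (∑ j ∈ Finset.range n, ⟪A x, g j⟫ • g j) - T n x
          = ∑ j ∈ Finset.range n, ⟪A x - A (S n x), g j⟫ • g j := by
        rw [← Finset.sum_sub_distrib]
        refine Finset.sum_congr rfl fun j _ => ?_
        rw [inner_sub_left, sub_smul]
      calc ‖A x - T n x‖
          = ‖(A x - ∑ j ∈ Finset.range n, ⟪A x, g j⟫ • g j)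
              + ((∑ j ∈ Finset.range n, ⟪A x, g j⟫ • g j) - T n x)‖ := by rw [sub_add_sub_cancel]
        _ ≤ ‖A x - ∑ j ∈ Finset.range n, ⟪A x, g j⟫ • g j‖
              + ‖(∑ j ∈ Finset.range n, ⟪A x, g j⟫ • g j) - T n x‖ := norm_add_le _ _
        _ ≤ _ := by
              gcongr
              rw [hQdiff]
              refine (trunc_norm_le g.orthonormal _ _).trans ?_
              rw [← map_sub]
              exact A.le_opNorm _
    simpa using (key.pow 2)
  -- continuity of T n
  have hTcont : ∀ n, Continuous fun x => T n x := by
    intro n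
    apply continuous_finset_sum
    intro j _
    refine Continuous.smul ?_ continuous_const
    refine Continuous.inner (A.continuous.comp ?_) continuous_const
    exact continuous_finset_sum _ fun i _ => (Continuous.inner continuous_id continuous_const).smul continuous_const
  have hmeas : ∀ n, AEStronglyMeasurable (fun x => ‖A x - T n x‖ ^ 2) μ := fun n =>
    (((A.continuous.sub (hTcont n)).norm.pow 2)).aestronglyMeasurable
  have hbd_int : Integrable (fun x : H => (2 * ‖A‖) ^ 2 * ‖x‖ ^ 2) μ := hμ.const_mul _
  have hb : ∀ n, ∀ᵐ x ∂μ, ‖‖A x - T n x‖ ^ 2‖ ≤ (2 * ‖A‖) ^ 2 * ‖x‖ ^ 2 := by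
    intro n
    refine Eventually.of_forall fun x => ?_
    rw [Real.norm_eq_abs, abs_of_nonneg (by positivity)]
    nlinarith [hbound n x, norm_nonneg (A x - T n x), norm_nonneg A, norm_nonneg x]
  have hDCT := tendsto_integral_of_dominated_convergence (μ := μ)
    (F := fun n x => ‖A x - T n x‖ ^ 2) (f := fun _ => (0 : ℝ)) _ hmeas hbd_int hb
    (Eventually.of_forall hlim)
  rw [integral_zero] at hDCT
  obtain ⟨n, hn⟩ := (hDCT.eventually (gt_mem_nhds hε)).exists
  refine ⟨n, n, fun a => WithLp.toLp 2 (fun j => ⟪A (∑ i : Fin n, a i • e i), g j⟫), ?_, ?_, ?_⟩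
  · refine (PiLp.continuous_toLp (p := 2) (β := fun _ : Fin n => ℝ)).comp ?_
    apply continuous_pi
    intro j
    refine Continuous.inner (A.continuous.comp ?_) continuous_const
    exact continuous_finset_sum _ fun i _ => ((continuous_apply (A := fun _ : Fin n => ℝ) i).comp (PiLp.continuous_ofLp (p := 2) (β := fun _ : Fin n => ℝ))).smul continuous_const
  all_goals {
    have hFeq : ∀ x : H,
        extMap g n ((fun (a : EuclideanSpace ℝ (Fin n)) => WithLp.toLp 2 (fun (j : Fin n) =>
          ⟪A (∑ i : Fin n, a i • e i), g j⟫)) (projMap e n x)) = T n x := by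
      intro x
      have hsx : (∑ i : Fin n, ⟪x, e (i : ℕ)⟫ • e (i : ℕ)) = S n x :=
        Fin.sum_univ_eq_sum_range (fun i => ⟪x, e i⟫ • e i) n
      simp only [extMap, projMap, WithLp.ofLp_toLp]
      rw [hsx]
      exact Fin.sum_univ_eq_sum_range (fun j => ⟪A (S n x), g j⟫ • g j) n
    simp only [hFeq]
    first
      | exact (hbd_int.mono' (hmeas n) (by
          refine Eventually.of_forall fun x => ?_
          have := hb n
          rw [Real.norm_eq_abs, abs_of_nonneg (by positivity)]
          nlinarith [hbound n x, norm_nonneg (A x - T n x), norm_nonneg A, norm_nonneg x]))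
      | exact hn }
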